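/- Let M be a real symmetric positive semidefinite m×m matrix, b ∈ ℝᵐ, and ε > 0 such that ‖Pb‖² < ε² < ‖b‖², where P denotes the orthogonal projection of ℝᵐ onto the kernel of M. Then there exists a unique α* ∈ (0,∞) satisfying (α*)² bᵀ(M + α*I)⁻²b = ε². -/

import Mathlib

open Matrix

/-- Existence and uniqueness of the discrepancy-principle parameter: if
`‖Pb‖² < ε² < ‖b‖²` (with `p = Pb` the orthogonal projection of `b` onto the
kernel of `M`), then there is a unique `α* > 0` with
`(α*)² bᵀ(M + α*I)⁻²b = ε²`. -/
theorem discrepancy_principle_unique_root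
    (m : ℕ) (M : Matrix (Fin m) (Fin m) ℝ) (b p : Fin m → ℝ) (ε : ℝ)
    (hM : M.PosSemidef) (hε : 0 < ε)
    (hp_ker : M *ᵥ p = 0)
    (hp_orth : ∀ q : Fin m → ℝ, M *ᵥ q = 0 → (b - p) ⬝ᵥ q = 0)
    (h_lo : ∑ i, p i ^ 2 < ε ^ 2) (h_hi : ε ^ 2 < ∑ i, b i ^ 2) :
    ∃! α : ℝ, 0 < α ∧
      α ^ 2 *
        (b ⬝ᵥ (((M + α • (1 : Matrix (Fin m) (Fin m) ℝ))⁻¹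
          * (M + α • (1 : Matrix (Fin m) (Fin m) ℝ))⁻¹) *ᵥ b)) = ε ^ 2 := by
  classical
  set U : Matrix (Fin m) (Fin m) ℝ := (hM.1.eigenvectorUnitary : Matrix (Fin m) (Fin m) ℝ) with hU
  set lam : Fin m → ℝ := hM.1.eigenvalues with hlam
  have hlam0 : ∀ i, 0 ≤ lam i := fun i => hM.eigenvalues_nonneg i
  have hstar : star U = Uᵀ := by simp [star]
  have hUU : U * Uᵀ = 1 := by
    rw [← hstar]; exact (Matrix.mem_unitaryGroup_iff).mp (hM.1.eigenvectorUnitary).2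
  have hUU' : Uᵀ * U = 1 := by
    rw [← hstar]; exact (Matrix.mem_unitaryGroup_iff').mp (hM.1.eigenvectorUnitary).2
  have hspec : M = U * diagonal lam * Uᵀ := by
    rw [← hstar]; simpa using hM.1.spectral_theorem
  set c : Fin m → ℝ := Uᵀ *ᵥ b with hc
  set d : Fin m → ℝ := Uᵀ *ᵥ p with hd
  -- generic dot-product computation
  have key : ∀ (g : Fin m → ℝ) (x : Fin m → ℝ),
      x ⬝ᵥ ((U * diagonal g * Uᵀ) *ᵥ x) = ∑ i, g i * (Uᵀ *ᵥ x) i ^ 2 := by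
    intro g x
    rw [← mulVec_mulVec, ← mulVec_mulVec, dotProduct_mulVec, ← mulVec_transpose]
    simp [dotProduct, mulVec_diagonal]
    refine Finset.sum_congr rfl fun i _ => by ring
  -- norm preservation
  have norm_pres : ∀ x : Fin m → ℝ, ∑ i, (Uᵀ *ᵥ x) i ^ 2 = ∑ i, x i ^ 2 := by
    intro x
    have h1 : (Uᵀ *ᵥ x) ⬝ᵥ (Uᵀ *ᵥ x) = x ⬝ᵥ x := by
      rw [dotProduct_mulVec, ← mulVec_transpose, transpose_transpose, mulVec_mulVec, hUU,
        one_mulVec]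
    simpa [dotProduct, sq] using h1
  -- d vanishes off the kernel
  have hDd : ∀ i, lam i * d i = 0 := by
    intro i
    have h0 : diagonal lam *ᵥ d = 0 := by
      have : Uᵀ *ᵥ (M *ᵥ p) = 0 := by rw [hp_ker]; simp
      rw [hspec, ← mulVec_mulVec, ← mulVec_mulVec, mulVec_mulVec, hUU', one_mulVec] at this
      simpa [hd] using this
    have := congrFun h0 i
    simpa [mulVec_diagonal] using this
  -- on the kernel, d agrees with c
  have hdc : ∀ i, lam i = 0 → d i = c i := by
    intro j hj
    have hcol : M *ᵥ (U *ᵥ Pi.single j 1) = 0 := by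
      rw [hspec, mulVec_mulVec, mul_assoc, hUU', mul_one, ← mulVec_mulVec,
        diagonal_mulVec_single, hj]
      simp
    have := hp_orth _ hcol
    rw [dotProduct_mulVec, ← mulVec_transpose] at this
    have h2 : (Uᵀ *ᵥ (b - p)) j = 0 := by simpa [dotProduct_single] using this
    have h3 : Uᵀ *ᵥ (b - p) = c - d := by
      simp [hc, hd, mulVec_sub]
    rw [h3] at h2
    exact ((sub_eq_zero.mp (by simpa using h2))).symm
  -- constant diagonal conjugation
  have hconst : ∀ α : ℝ, U * diagonal (fun _ : Fin m => α) * Uᵀ = α • 1 := by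
    intro α
    rw [← smul_one_eq_diagonal, mul_smul_comm, mul_one, smul_mul_assoc, hUU]
  have hNdiag : ∀ α : ℝ, M + α • (1 : Matrix (Fin m) (Fin m) ℝ)
      = U * diagonal (fun i => lam i + α) * Uᵀ := by
    intro α
    calc M + α • (1 : Matrix (Fin m) (Fin m) ℝ)
        = U * diagonal lam * Uᵀ + U * diagonal (fun _ : Fin m => α) * Uᵀ := by
          rw [← hspec, hconst]
      _ = U * (diagonal lam + diagonal (fun _ : Fin m => α)) * Uᵀ := by
          rw [mul_add, add_mul]
      _ = U * diagonal (fun i => lam i + α) * Uᵀ := by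
          rw [diagonal_add]
  have hprod : ∀ g h : Fin m → ℝ, (U * diagonal g * Uᵀ) * (U * diagonal h * Uᵀ)
      = U * diagonal (fun i => g i * h i) * Uᵀ := by
    intro g h
    have h1 : (U * diagonal g * Uᵀ) * (U * diagonal h * Uᵀ)
        = U * (diagonal g * ((Uᵀ * U) * (diagonal h * Uᵀ))) := by
      simp only [mul_assoc]
    rw [h1, hUU', one_mul, ← mul_assoc (diagonal g), diagonal_mul_diagonal, ← mul_assoc]
  have hne : ∀ (α : ℝ), 0 < α → ∀ i, lam i + α ≠ 0 := by
    intro α hα i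
    have := hlam0 i
    positivity
  have hinv : ∀ α : ℝ, 0 < α →
      (M + α • (1 : Matrix (Fin m) (Fin m) ℝ))⁻¹
        = U * diagonal (fun i => (lam i + α)⁻¹) * Uᵀ := by
    intro α hα
    apply inv_eq_right_inv
    rw [hNdiag α, hprod]
    have : (fun i => (lam i + α) * (lam i + α)⁻¹) = fun _ : Fin m => (1:ℝ) := by
      funext i
      exact mul_inv_cancel₀ (hne α hα i)
    rw [this, diagonal_one, mul_one, hUU]
  -- the LHS as a scalar function
  have hLHS : ∀ α : ℝ, 0 < α →
      α ^ 2 * (b ⬝ᵥ (((M + α • (1 : Matrix (Fin m) (Fin m) ℝ))⁻¹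
          * (M + α • (1 : Matrix (Fin m) (Fin m) ℝ))⁻¹) *ᵥ b))
        = ∑ i, c i ^ 2 * (α / (lam i + α)) ^ 2 := by
    intro α hα
    rw [hinv α hα, hprod, key, Finset.mul_sum]
    refine Finset.sum_congr rfl fun i _ => ?_
    have h0 := hne α hα i
    rw [← hc]
    field_simp
  set s : ℝ := ∑ i, p i ^ 2 with hs
  have hs_eq : s = ∑ i, (if lam i = 0 then c i ^ 2 else 0) := by
    have h1 : s = ∑ i, d i ^ 2 := (norm_pres p).symm
    rw [h1]
    refine Finset.sum_congr rfl fun i _ => ?_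
    by_cases h : lam i = 0
    · rw [if_pos h, hdc i h]
    · rw [if_neg h]
      have hdi : d i = 0 := by
        rcases mul_eq_zero.mp (hDd i) with h' | h'
        · exact absurd h' h
        · exact h'
      simp [hdi]
  have hc_eq : (∑ i, b i ^ 2) = ∑ i, c i ^ 2 := (norm_pres b).symm
  set G : ℝ → ℝ :=
    fun α => ∑ i, (if lam i = 0 then 0 else c i ^ 2 * (α / (lam i + α)) ^ 2) with hG
  have hFsG : ∀ α : ℝ, 0 < α →
      (∑ i, c i ^ 2 * (α / (lam i + α)) ^ 2) = s + G α := by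
    intro α hα
    rw [hs_eq, hG, ← Finset.sum_add_distrib]
    refine Finset.sum_congr rfl fun i _ => ?_
    by_cases h : lam i = 0
    · simp [h, div_self (ne_of_gt hα)]
    · simp [h]
  have hlpos : ∀ i, lam i ≠ 0 → 0 < lam i := fun i h => lt_of_le_of_ne (hlam0 i) (Ne.symm h)
  set T : ℝ := ∑ i, (if lam i = 0 then 0 else c i ^ 2) with hT
  have hsT : s + T = ∑ i, c i ^ 2 := by
    rw [hs_eq, hT, ← Finset.sum_add_distrib]
    refine Finset.sum_congr rfl fun i _ => ?_
    by_cases h : lam i = 0 <;> simp [h]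
  have hεT : ε ^ 2 - s < T := by
    have hb : ε ^ 2 < ∑ i, c i ^ 2 := hc_eq ▸ h_hi
    linarith
  have hex : ∃ i, lam i ≠ 0 ∧ c i ≠ 0 := by
    by_contra hcon
    push_neg at hcon
    have hT0 : T = 0 := by
      rw [hT]
      apply Finset.sum_eq_zero
      intro i _
      by_cases h : lam i = 0
      · simp [h]
      · simp [h, hcon i h]
    linarith
  have hGmono : StrictMonoOn G (Set.Ici 0) := by
    intro x hx y hy hxy
    have hx0 : (0:ℝ) ≤ x := hx
    apply Finset.sum_lt_sum
    · intro i _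
      by_cases h : lam i = 0
      · simp [h]
      · simp only [if_neg h]
        have hl : 0 < lam i := hlpos i h
        have hmono : x / (lam i + x) ≤ y / (lam i + y) := by
          rw [div_le_div_iff₀ (by linarith) (by linarith)]
          nlinarith
        have h0 : 0 ≤ x / (lam i + x) := by positivity
        have h2 : (x / (lam i + x)) ^ 2 ≤ (y / (lam i + y)) ^ 2 :=
          pow_le_pow_left₀ h0 hmono 2
        exact mul_le_mul_of_nonneg_left h2 (sq_nonneg (c i))
    · obtain ⟨i, hli, hci⟩ := hex
      refine ⟨i, Finset.mem_univ i, ?_⟩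
      simp only [if_neg hli]
      have hl : 0 < lam i := hlpos i hli
      have h1 : x / (lam i + x) < y / (lam i + y) := by
        rw [div_lt_div_iff₀ (by linarith) (by linarith)]
        nlinarith
      have h0 : 0 ≤ x / (lam i + x) := by positivity
      have h2 : (x / (lam i + x)) ^ 2 < (y / (lam i + y)) ^ 2 := by nlinarith
      have h3 : 0 < c i ^ 2 := by positivity
      exact mul_lt_mul_of_pos_left h2 h3
  have hGcont : ContinuousOn G (Set.Ici 0) := by
    apply continuousOn_finset_sum
    intro i _
    by_cases h : lam i = 0
    · simp only [if_pos h]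
      exact continuousOn_const
    · simp only [if_neg h]
      have hl : 0 < lam i := hlpos i h
      apply ContinuousOn.mul continuousOn_const
      apply ContinuousOn.pow
      apply ContinuousOn.div continuousOn_id (continuousOn_const.add continuousOn_id)
      intro x hx
      have : (0:ℝ) ≤ x := hx
      change lam i + x ≠ 0
      intro hcontra
      linarith [hcontra]
  have hGtend : Filter.Tendsto G Filter.atTop (nhds T) := by
    rw [hG, hT]
    apply tendsto_finset_sum
    intro i _
    by_cases h : lam i = 0
    · simp only [if_pos h]
      exact tendsto_const_nhds
    · simp only [if_neg h]
      have hl : 0 < lam i := hlpos i h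
      have h1 : Filter.Tendsto (fun α : ℝ => lam i / (lam i + α)) Filter.atTop (nhds 0) :=
        Filter.Tendsto.div_atTop tendsto_const_nhds
          (Filter.tendsto_atTop_add_const_left _ _ Filter.tendsto_id)
      have h3 : Filter.Tendsto (fun α : ℝ => 1 - lam i / (lam i + α)) Filter.atTop (nhds 1) := by
        simpa using tendsto_const_nhds.sub h1
      have heq : ∀ᶠ α : ℝ in Filter.atTop,
          (fun α : ℝ => 1 - lam i / (lam i + α)) α = (fun α : ℝ => α / (lam i + α)) α := by
        filter_upwards [Filter.eventually_gt_atTop (0:ℝ)] with α hα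
        have : lam i + α ≠ 0 := by positivity
        field_simp
        ring
      have h2 : Filter.Tendsto (fun α : ℝ => α / (lam i + α)) Filter.atTop (nhds 1) :=
        Filter.Tendsto.congr' heq h3
      have h4 := (h2.pow 2).const_mul (c i ^ 2)
      simpa using h4
  have hev : ∀ᶠ α : ℝ in Filter.atTop, ε ^ 2 - s < G α ∧ 0 < α :=
    (hGtend.eventually (eventually_gt_nhds hεT)).and (Filter.eventually_gt_atTop 0)
  obtain ⟨α₁, hα₁G, hα₁pos⟩ := hev.exists
  have hG0 : G 0 = 0 := by
    rw [hG]
    apply Finset.sum_eq_zero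
    intro i _
    by_cases h : lam i = 0 <;> simp [h]
  have hIVT := intermediate_value_Icc (le_of_lt hα₁pos)
    (hGcont.mono (fun x hx => hx.1 : Set.Icc (0:ℝ) α₁ ⊆ Set.Ici 0))
  have hmem : ε ^ 2 - s ∈ Set.Icc (G 0) (G α₁) := by
    rw [hG0]
    exact ⟨by linarith, le_of_lt hα₁G⟩
  obtain ⟨α₀, hα₀mem, hα₀eq⟩ := hIVT hmem
  have hα₀pos : 0 < α₀ := by
    rcases lt_or_eq_of_le hα₀mem.1 with h | h
    · exact h
    · exfalso
      rw [← h, hG0] at hα₀eq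
      linarith
  refine ⟨α₀, ⟨hα₀pos, ?_⟩, ?_⟩
  · rw [hLHS α₀ hα₀pos, hFsG α₀ hα₀pos, hα₀eq]
    ring
  · rintro y ⟨hy, hyeq⟩
    rw [hLHS y hy, hFsG y hy] at hyeq
    have hGy : G y = G α₀ := by rw [hα₀eq]; linarith
    exact hGmono.injOn (Set.mem_Ici.mpr hy.le) (Set.mem_Ici.mpr hα₀pos.le) hGy
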